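/- Let d ≥ 2 and let G=(V,E) be a connected, acyclic, d-regular simple graph (the infinite d-regular tree). Let v₁,v₂,… be a bijective enumeration of V such that for every N ≥ 1 the set {v₁,…,v_N} induces a connected subgraph and every vertex adjacent to {v₁,…,v_N} lies in {v₁,…,v_{(d−1)N+2}} (these properties hold for the canonical breadth-first ordering starting at a root). Then for every finitely supported f : V → ℝ_{≥0}, every real p with 1 ≤ p < ∞, and also p = ∞, the associated rearrangement satisfies ‖∇f*‖_{L^p} ≤ ‖∇f‖_{L^p}. -/

import Mathlib

open Real


namespace TreePS

open MeasureTheory intervalIntegral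

-- L1: downward-closed finsets of ℕ
lemma dcl_mem_iff_lt_card (S : Finset ℕ) (h : ∀ k ∈ S, ∀ j ≤ k, j ∈ S) :
    ∀ n, n ∈ S ↔ n < S.card := by
  intro n
  constructor
  · intro hn
    have hsub : Finset.range (n + 1) ⊆ S := by
      intro j hj
      exact h n hn j (by simpa [Nat.lt_succ_iff] using hj)
    have := Finset.card_le_card hsub
    simpa using this
  · intro hn
    by_contra hns
    have hsub : S ⊆ Finset.range n := by
      intro k hk
      simp only [Finset.mem_range]
      by_contra hkn
      exact hns (h k hk n (by omega))
    have := Finset.card_le_card hsub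
    simp at this; omega

-- indicator integral identity
lemma max_sub_eq_integral_indicator (α β : ℝ) :
    max (β - α) 0 = ∫ r, Set.indicator (Set.Ico α β) (fun _ => (1:ℝ)) r := by
  rw [MeasureTheory.integral_indicator_const _ measurableSet_Ico]
  simp [Real.volume_Ico, ENNReal.toReal_ofReal']

-- C2 abstract: sum of (length)_+ comparison via pointwise crossing-count comparison
lemma sum_max_le_of_card {ι : Type*} (s : Finset ι) (c e c' e' : ι → ℝ)
    (H : ∀ r : ℝ, ((s.filter (fun i => e i ≤ r ∧ r < c i)).card : ℝ)
        ≤ ((s.filter (fun i => e' i ≤ r ∧ r < c' i)).card : ℝ)) :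
    ∑ i ∈ s, max (c i - e i) 0 ≤ ∑ i ∈ s, max (c' i - e' i) 0 := by
  have hint : ∀ (u w : ι → ℝ), Integrable
      (fun r => ∑ i ∈ s, Set.indicator (Set.Ico (w i) (u i)) (fun _ => (1:ℝ)) r) := by
    intro u w
    apply integrable_finset_sum
    intro i _
    rw [MeasureTheory.integrable_indicator_iff measurableSet_Ico]
    exact integrableOn_const measure_Ico_lt_top.ne (by simp)
  have hsum : ∀ (u w : ι → ℝ) (r : ℝ),
      (∑ i ∈ s, Set.indicator (Set.Ico (w i) (u i)) (fun _ => (1:ℝ)) r)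
        = ((s.filter (fun i => w i ≤ r ∧ r < u i)).card : ℝ) := by
    intro u w r
    rw [← Finset.sum_boole]
    refine Finset.sum_congr rfl fun i _ => ?_
    by_cases h : r ∈ Set.Ico (w i) (u i)
    · rw [Set.indicator_of_mem h]; simp [Set.mem_Ico] at h; simp [h]
    · rw [Set.indicator_of_notMem h]; simp [Set.mem_Ico] at h
      by_cases h1 : w i ≤ r
      · simp [h1, not_lt.2 (h h1)]
      · simp [h1]
  calc ∑ i ∈ s, max (c i - e i) 0
      = ∫ r, ∑ i ∈ s, Set.indicator (Set.Ico (e i) (c i)) (fun _ => (1:ℝ)) r := by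
        rw [MeasureTheory.integral_finset_sum]
        · exact Finset.sum_congr rfl fun i _ => max_sub_eq_integral_indicator _ _
        · intro i _
          rw [MeasureTheory.integrable_indicator_iff measurableSet_Ico]
          exact integrableOn_const measure_Ico_lt_top.ne (by simp)
    _ ≤ ∫ r, ∑ i ∈ s, Set.indicator (Set.Ico (e' i) (c' i)) (fun _ => (1:ℝ)) r := by
        apply integral_mono (hint c e) (hint c' e')
        intro r
        simp only []
        rw [hsum c e r, hsum c' e' r]
        exact H r
    _ = ∑ i ∈ s, max (c' i - e' i) 0 := by
        rw [MeasureTheory.integral_finset_sum]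
        · exact Finset.sum_congr rfl fun i _ => (max_sub_eq_integral_indicator _ _).symm
        · intro i _
          rw [MeasureTheory.integrable_indicator_iff measurableSet_Ico]
          exact integrableOn_const measure_Ico_lt_top.ne (by simp)


open MeasureTheory intervalIntegral Real

-- key pointwise identity
lemma integral_rpow_max {p : ℝ} (hp : 1 < p) (u T : ℝ) (hu : 0 ≤ u) (huT : u ≤ T) :
    ∫ t in (0:ℝ)..T, t ^ (p - 2) * max (u - t) 0 = u ^ p / (p * (p - 1)) := by
  have hr : (-1 : ℝ) < p - 2 := by linarith
  have hII : ∀ (aa bb : ℝ), IntervalIntegrable (fun t => t ^ (p-2) * max (u - t) 0) volume aa bb := by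
    intro aa bb
    exact (intervalIntegral.intervalIntegrable_rpow' hr).mul_continuousOn
      (Continuous.continuousOn (by continuity))
  have hsplit := intervalIntegral.integral_add_adjacent_intervals (hII 0 u) (hII u T)
  have h2 : ∫ t in u..T, t ^ (p-2) * max (u - t) 0 = 0 := by
    rw [intervalIntegral.integral_congr (g := fun _ => (0:ℝ))]
    · simp
    · intro t ht
      rw [Set.uIcc_of_le huT] at ht
      have : u - t ≤ 0 := by have := ht.1; linarith
      simp [max_eq_right this]
  have h1 : ∫ t in (0:ℝ)..u, t ^ (p-2) * max (u - t) 0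
      = u ^ p / (p - 1) - u ^ p / p := by
    rw [intervalIntegral.integral_congr (g := fun t => u * t ^ (p-2) - t ^ (p-1))]
    · rw [intervalIntegral.integral_sub ((intervalIntegrable_rpow' hr).const_mul u)
        (intervalIntegrable_rpow' (by linarith : (-1:ℝ) < p - 1)),
        intervalIntegral.integral_const_mul, integral_rpow (Or.inl hr),
        integral_rpow (Or.inl (by linarith : (-1:ℝ) < p - 1))]
      have e1 : p - 2 + 1 = p - 1 := by ring
      have e2 : p - 1 + 1 = p := by ring
      rw [e1, e2]
      have hz1 : (0:ℝ) ^ (p - 1) = 0 := by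
        rw [Real.zero_rpow (by linarith : p - 1 ≠ 0)]
      have hz2 : (0:ℝ) ^ p = 0 := by
        rw [Real.zero_rpow (by linarith : p ≠ 0)]
      rw [hz1, hz2]
      rcases eq_or_lt_of_le hu with h0 | h0
      · rw [← h0]
        rw [hz1, hz2]
        ring
      · have : u * u ^ (p - 1) = u ^ p := by
          rw [← Real.rpow_one_add' hu (by linarith : 1 + (p-1) ≠ 0)]
          ring_nf
        rw [sub_zero, sub_zero, ← mul_div_assoc, this]
    · intro t ht
      rw [Set.uIcc_of_le hu] at ht
      have hmax : max (u - t) 0 = u - t := max_eq_left (by linarith [ht.2])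
      simp only []
      rw [hmax]
      rcases eq_or_lt_of_le ht.1 with h0 | h0
      · rw [← h0]
        have hz1 : (0:ℝ) ^ (p - 1) = 0 := Real.zero_rpow (by linarith : p - 1 ≠ 0)
        rw [hz1]; ring
      · have : t ^ (p - 1) = t ^ (p - 2) * t := by
          rw [← Real.rpow_add_one h0.ne']
          ring_nf
        rw [this]; ring
  rw [← hsplit, h2, h1]
  have hp0 : p ≠ 0 := by linarith
  have hp1 : p - 1 ≠ 0 := by linarith
  field_simp
  ring

lemma sum_rpow_le_sum_rpow {ι : Type*} (s : Finset ι) (x y : ι → ℝ)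
    (hx : ∀ i ∈ s, 0 ≤ x i) (hy : ∀ i ∈ s, 0 ≤ y i)
    (H : ∀ t, 0 ≤ t → ∑ i ∈ s, max (x i - t) 0 ≤ ∑ i ∈ s, max (y i - t) 0)
    {p : ℝ} (hp : 1 < p) :
    ∑ i ∈ s, x i ^ p ≤ ∑ i ∈ s, y i ^ p := by
  set T : ℝ := ∑ i ∈ s, y i with hT
  have hT0 : 0 ≤ T := Finset.sum_nonneg hy
  have hyT : ∀ i ∈ s, y i ≤ T := fun i hi => Finset.single_le_sum hy hi
  have hymax : ∑ i ∈ s, max (y i - T) 0 = 0 := by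
    apply Finset.sum_eq_zero
    intro i hi
    exact max_eq_right (by linarith [hyT i hi])
  have hxT : ∀ i ∈ s, x i ≤ T := by
    intro i hi
    have h1 : ∑ j ∈ s, max (x j - T) 0 ≤ 0 := le_trans (H T hT0) (le_of_eq hymax)
    have h2 : ∀ j ∈ s, (0:ℝ) ≤ max (x j - T) 0 := fun j _ => le_max_right _ _
    have h4 : max (x i - T) 0 ≤ ∑ j ∈ s, max (x j - T) 0 :=
      Finset.single_le_sum h2 hi
    have h5 : x i - T ≤ max (x i - T) 0 := le_max_left _ _
    linarith
  have hr : (-1 : ℝ) < p - 2 := by linarith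
  have hII : ∀ (u : ℝ), IntervalIntegrable (fun t => t ^ (p-2) * max (u - t) 0) volume 0 T :=
    fun u => (intervalIntegral.intervalIntegrable_rpow' hr).mul_continuousOn
      (Continuous.continuousOn (by continuity))
  have hpp : (0:ℝ) < p * (p - 1) := by nlinarith
  have key : ∀ (z : ι → ℝ), (∀ i ∈ s, 0 ≤ z i) → (∀ i ∈ s, z i ≤ T) →
      ∑ i ∈ s, z i ^ p
        = (p * (p-1)) * ∫ t in (0:ℝ)..T, ∑ i ∈ s, t ^ (p-2) * max (z i - t) 0 := by
    intro z hz hzT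
    rw [intervalIntegral.integral_finset_sum (fun i hi => hII (z i)), Finset.mul_sum]
    refine Finset.sum_congr rfl fun i hi => ?_
    rw [integral_rpow_max hp (z i) T (hz i hi) (hzT i hi)]
    field_simp
    exact (mul_div_cancel_right₀ _ (by linarith : p - 1 ≠ 0)).symm
  rw [key x hx hxT, key y hy hyT]
  apply mul_le_mul_of_nonneg_left _ (le_of_lt hpp)
  have hIx : IntervalIntegrable (fun t => ∑ i ∈ s, t ^ (p-2) * max (x i - t) 0) volume 0 T := by
    have h := IntervalIntegrable.sum s (fun i _ => hII (x i)); rwa [Finset.sum_fn] at h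
  have hIy : IntervalIntegrable (fun t => ∑ i ∈ s, t ^ (p-2) * max (y i - t) 0) volume 0 T := by
    have h := IntervalIntegrable.sum s (fun i _ => hII (y i)); rwa [Finset.sum_fn] at h
  apply intervalIntegral.integral_mono_on hT0 hIx hIy
  intro t ht
  rw [← Finset.mul_sum, ← Finset.mul_sum]
  exact mul_le_mul_of_nonneg_left (H t ht.1) (Real.rpow_nonneg ht.1 _)


open Finset

lemma dcl_mem_iff_lt_card' (S : Finset ℕ) (h : ∀ k ∈ S, ∀ j ≤ k, j ∈ S) :
    ∀ n, n ∈ S ↔ n < S.card := by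
  intro n
  constructor
  · intro hn
    have hsub : Finset.range (n + 1) ⊆ S := fun j hj =>
      h n hn j (by simpa [Nat.lt_succ_iff] using hj)
    have := Finset.card_le_card hsub
    simpa using this
  · intro hn
    by_contra hns
    have hsub : S ⊆ Finset.range n := by
      intro k hk
      simp only [Finset.mem_range]
      by_contra hkn
      exact hns (h k hk n (by omega))
    have := Finset.card_le_card hsub
    simp at this; omega

lemma crossing_card_le
    (d K : ℕ) (hd : 2 ≤ d) (hK : 1 ≤ K)
    (P : ℕ → ℕ) (a b : ℕ → ℝ)
    (hPlt : ∀ n, 1 ≤ n → P n < n)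
    (hkey : ∀ M n, 1 ≤ M → M ≤ K → 1 ≤ n → (P n < M ↔ n ≤ (d-1)*M+1))
    (hfib : ∀ m, m < K →
      (((Finset.Ico 1 ((d-1)*K+2)).filter (fun n => P n = m)).card
        = d - 1 + if m = 0 then 1 else 0))
    (ha0 : ∀ n, 0 ≤ a n) (hb0 : ∀ n, 0 ≤ b n)
    (hanti : ∀ m n, m ≤ n → a n ≤ a m)
    (hsa : ∀ n, K ≤ n → a n = 0) (hsb : ∀ n, K ≤ n → b n = 0)
    (hcount : ∀ s : ℝ, 0 ≤ s →
      ((Finset.range K).filter (fun k => s < a k)).card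
        = ((Finset.range K).filter (fun k => s < b k)).card)
    (t : ℝ) (ht : 0 ≤ t) (s : ℝ) :
    (((Finset.Ico 1 ((d-1)*K+2)).filter (fun n => a n ≤ s ∧ s < a (P n) - t)).card : ℝ)
      ≤ (((Finset.Ico 1 ((d-1)*K+2)).filter
          (fun n => min (b (P n)) (b n) ≤ s ∧ s < max (b (P n)) (b n) - t)).card : ℝ) := by
  set R := (d-1)*K+2 with hR
  by_cases hs : 0 ≤ s
  swap
  · have : (Finset.Ico 1 R).filter (fun n => a n ≤ s ∧ s < a (P n) - t) = ∅ := by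
      apply Finset.filter_false_of_mem
      intro n _
      intro hcon
      have := ha0 n
      push_neg at hs
      exact absurd hcon.1 (by linarith)
    rw [this]
    simp [Nat.cast_nonneg]
  -- main case
  refine Nat.cast_le.2 ?_
  have hsort : ∀ r : ℝ, 0 ≤ r → ∀ n,
      (r < a n ↔ n < ((Finset.range K).filter (fun k => r < a k)).card) := by
    intro r hr n
    have hdcl : ∀ k ∈ (Finset.range K).filter (fun k => r < a k), ∀ j ≤ k,
        j ∈ (Finset.range K).filter (fun k => r < a k) := by
      intro k hk j hj
      simp only [Finset.mem_filter, Finset.mem_range] at hk ⊢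
      exact ⟨lt_of_le_of_lt hj hk.1, lt_of_lt_of_le hk.2 (hanti j k hj)⟩
    rw [← dcl_mem_iff_lt_card' _ hdcl n]
    simp only [Finset.mem_filter, Finset.mem_range]
    constructor
    · intro h
      refine ⟨?_, h⟩
      by_contra hnK
      push_neg at hnK
      rw [hsa n hnK] at h
      linarith
    · exact fun h => h.2
  set N := ((Finset.range K).filter (fun k => s < a k)).card with hN
  set M := ((Finset.range K).filter (fun k => s + t < a k)).card with hM
  have hst : (0:ℝ) ≤ s + t := by linarith
  have hMN : M ≤ N := by
    apply Finset.card_le_card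
    intro k hk
    simp only [Finset.mem_filter, Finset.mem_range] at hk ⊢
    exact ⟨hk.1, by linarith [hk.2]⟩
  have hMK : M ≤ K := le_trans (Finset.card_filter_le _ _) (by simp)
  by_cases hM0 : M = 0
  · have : (Finset.Ico 1 R).filter (fun n => a n ≤ s ∧ s < a (P n) - t) = ∅ := by
      apply Finset.filter_false_of_mem
      intro n _ hcon
      have h1 : s + t < a (P n) := by linarith [hcon.2]
      have := (hsort (s+t) hst (P n)).1 h1
      omega
    rw [this]
    simp
  have hM1 : 1 ≤ M := by omega
  have hN1 : 1 ≤ N := by omega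
  have hKR : K < R := by
    have : K ≤ (d-1)*K := Nat.le_mul_of_pos_left K (by omega)
    omega
  have hLHS : (Finset.Ico 1 R).filter (fun n => a n ≤ s ∧ s < a (P n) - t)
      = Finset.Icc N ((d-1)*M+1) := by
    ext n
    simp only [Finset.mem_filter, Finset.mem_Ico, Finset.mem_Icc]
    constructor
    · rintro ⟨⟨h1n, hnR⟩, hans, hsP⟩
      constructor
      · by_contra hcon
        push_neg at hcon
        have := (hsort s hs n).2 hcon
        linarith
      · have h1 : s + t < a (P n) := by linarith
        have h2 : P n < M := (hsort (s+t) hst (P n)).1 h1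
        exact (hkey M n hM1 hMK h1n).1 h2
    · rintro ⟨hNn, hnM⟩
      have h1n : 1 ≤ n := le_trans hN1 hNn
      have hnR : n < R := by
        have : (d-1)*M ≤ (d-1)*K := Nat.mul_le_mul_left _ hMK
        omega
      have hans : a n ≤ s := by
        by_contra hcon
        push_neg at hcon
        have := (hsort s hs n).1 hcon
        omega
      have hPn : P n < M := (hkey M n hM1 hMK h1n).2 hnM
      have : s + t < a (P n) := (hsort (s+t) hst (P n)).2 hPn
      exact ⟨⟨h1n, hnR⟩, hans, by linarith⟩
  rw [hLHS, Nat.card_Icc]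
  -- the b-side counting
  set A := (Finset.range K).filter (fun k => s < b k) with hA
  set B := (Finset.range K).filter (fun k => s + t < b k) with hB
  have hAc : A.card = N := (hcount s hs).symm
  have hBc : B.card = M := (hcount (s+t) hst).symm
  have hBA : B ⊆ A := by
    intro k hk
    simp only [hA, hB, Finset.mem_filter, Finset.mem_range] at hk ⊢
    exact ⟨hk.1, by linarith [hk.2]⟩
  classical
  set I := Finset.Ico 1 R with hI
  set E := I.filter (fun n => (n ∈ B ∧ P n ∉ A) ∨ (P n ∈ B ∧ n ∉ A)) with hE
  set Wp := I.filter (fun n => P n ∈ B) with hWp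
  set W := I.filter (fun n => n ∈ B ∨ P n ∈ B) with hW
  set B' := I.filter (fun n => n ∈ B ∧ P n ∉ B) with hB'
  set InB := I.filter (fun n => n ∈ B ∧ P n ∈ B) with hInB
  set InA := I.filter (fun n => n ∈ A ∧ P n ∈ A) with hInA
  set Hh := I.filter (fun n => (n ∈ B ∧ P n ∈ A ∧ P n ∉ B) ∨ (P n ∈ B ∧ n ∈ A ∧ n ∉ B)) with hHh
  -- f1
  have f1 : Wp.card = (d-1)*M + (if 0 ∈ B then 1 else 0) := by
    have hbij : Wp = B.biUnion (fun m => I.filter (fun n => P n = m)) := by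
      ext n
      simp only [hWp, Finset.mem_filter, Finset.mem_biUnion]
      constructor
      · rintro ⟨hnI, hPB⟩; exact ⟨P n, hPB, hnI, rfl⟩
      · rintro ⟨m, hm, hnI, rfl⟩; exact ⟨hnI, hm⟩
    rw [hbij, Finset.card_biUnion]
    · have : ∀ m ∈ B, (I.filter (fun n => P n = m)).card
          = d - 1 + if m = 0 then 1 else 0 := by
        intro m hm
        have hmK : m < K := by
          have := hBA hm
          simp only [hA, Finset.mem_filter, Finset.mem_range] at this
          exact this.1
        exact hfib m hmK
      rw [Finset.sum_congr rfl this, Finset.sum_add_distrib, Finset.sum_const, hBc,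
        Finset.sum_ite_eq' B 0 (fun _ => 1)]
      simp only [smul_eq_mul]
      ring_nf
    · intro m₁ h₁ m₂ h₂ hne
      apply Finset.disjoint_left.2
      intro n hn₁ hn₂
      simp only [Finset.mem_filter] at hn₁ hn₂
      exact hne (hn₁.2 ▸ hn₂.2 ▸ rfl)
  -- f2
  have f2 : Wp.card + B'.card ≤ W.card := by
    rw [← Finset.card_union_of_disjoint]
    · apply Finset.card_le_card
      intro n hn
      simp only [Finset.mem_union, hWp, hB', hW, Finset.mem_filter] at hn ⊢
      rcases hn with h | h
      · exact ⟨h.1, Or.inr h.2⟩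
      · exact ⟨h.1, Or.inl h.2.1⟩
    · apply Finset.disjoint_left.2
      intro n hn₁ hn₂
      simp only [hWp, hB', Finset.mem_filter] at hn₁ hn₂
      exact hn₂.2.2 hn₁.2
  -- f3
  have f3 : InB.card + B'.card + (if 0 ∈ B then 1 else 0) = M := by
    have hIB : I.filter (fun n => n ∈ B) = B.erase 0 := by
      ext n
      simp only [hI, Finset.mem_filter, Finset.mem_Ico, Finset.mem_erase]
      constructor
      · rintro ⟨⟨h1, _⟩, hnB⟩; exact ⟨by omega, hnB⟩
      · rintro ⟨hne, hnB⟩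
        have : n < K := by
          have := hnB
          simp only [hB, Finset.mem_filter, Finset.mem_range] at this
          exact this.1
        exact ⟨⟨by omega, by omega⟩, hnB⟩
    have hsplit := Finset.card_filter_add_card_filter_not
      (s := I.filter (fun n => n ∈ B)) (p := fun n => P n ∈ B)
    rw [Finset.filter_filter, Finset.filter_filter] at hsplit
    have e1 : InB = I.filter (fun n => n ∈ B ∧ P n ∈ B) := rfl
    have e2 : B' = I.filter (fun n => n ∈ B ∧ P n ∉ B) := rfl
    rw [e1, e2]
    rw [hIB] at hsplit
    by_cases h0 : 0 ∈ B
    · rw [Finset.card_erase_of_mem h0, hBc] at hsplit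
      simp only [h0, if_true]
      omega
    · rw [Finset.erase_eq_of_notMem h0, hBc] at hsplit
      simp only [h0, if_false]
      omega
  -- f4
  have f4 : W.card ≤ InB.card + E.card + Hh.card := by
    calc W.card ≤ (InB ∪ E ∪ Hh).card := by
          apply Finset.card_le_card
          intro n hn
          simp only [hW, hInB, hE, hHh, Finset.mem_union, Finset.mem_filter] at hn ⊢
          rcases hn with ⟨hnI, hc⟩
          by_cases h1 : n ∈ B
          · by_cases h2 : P n ∈ B
            · exact Or.inl (Or.inl ⟨hnI, h1, h2⟩)
            · by_cases h3 : P n ∈ A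
              · exact Or.inr ⟨hnI, Or.inl ⟨h1, h3, h2⟩⟩
              · exact Or.inl (Or.inr ⟨hnI, Or.inl ⟨h1, h3⟩⟩)
          · have hPB : P n ∈ B := by tauto
            by_cases h3 : n ∈ A
            · exact Or.inr ⟨hnI, Or.inr ⟨hPB, h3, h1⟩⟩
            · exact Or.inl (Or.inr ⟨hnI, Or.inr ⟨hPB, h3⟩⟩)
      _ ≤ InB.card + E.card + Hh.card := by
          calc (InB ∪ E ∪ Hh).card ≤ (InB ∪ E).card + Hh.card := Finset.card_union_le _ _
            _ ≤ InB.card + E.card + Hh.card := by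
                have := Finset.card_union_le InB E
                omega
  -- f5
  have f5 : Hh.card + InB.card ≤ InA.card := by
    rw [← Finset.card_union_of_disjoint]
    · apply Finset.card_le_card
      intro n hn
      simp only [Finset.mem_union, hHh, hInB, hInA, Finset.mem_filter] at hn ⊢
      rcases hn with ⟨hnI, hc⟩ | ⟨hnI, h1, h2⟩
      · rcases hc with ⟨h1, h2, _⟩ | ⟨h1, h2, _⟩
        · exact ⟨hnI, hBA h1, h2⟩
        · exact ⟨hnI, h2, hBA h1⟩
      · exact ⟨hnI, hBA h1, hBA h2⟩
    · apply Finset.disjoint_left.2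
      intro n hn₁ hn₂
      simp only [hHh, hInB, Finset.mem_filter] at hn₁ hn₂
      rcases hn₁.2 with h | h
      · exact h.2.2 hn₂.2.2
      · exact h.2.2 hn₂.2.1
  -- f6 and f7 : forest bounds
  have forest : ∀ (S : Finset ℕ), 1 ≤ S.card →
      (I.filter (fun n => n ∈ S ∧ P n ∈ S)).card ≤ S.card - 1 := by
    intro S hScard
    have hSne : S.Nonempty := Finset.card_pos.1 (by omega)
    have hsub : I.filter (fun n => n ∈ S ∧ P n ∈ S) ⊆ S.erase (S.min' hSne) := by
      intro n hn
      simp only [Finset.mem_filter, hI, Finset.mem_Ico, Finset.mem_erase] at hn ⊢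
      refine ⟨?_, hn.2.1⟩
      intro hcon
      have h1 : S.min' hSne ≤ P n := Finset.min'_le _ _ hn.2.2
      have h2 : P n < n := hPlt n hn.1.1
      omega
    calc (I.filter (fun n => n ∈ S ∧ P n ∈ S)).card ≤ (S.erase (S.min' hSne)).card :=
          Finset.card_le_card hsub
      _ = S.card - 1 := Finset.card_erase_of_mem (S.min'_mem hSne)
  have f6 : InA.card ≤ N - 1 := by
    have := forest A (by omega)
    rw [hAc] at this
    exact this
  have f7 : InB.card ≤ M - 1 := by
    have := forest B (by omega)
    rw [hBc] at this
    exact this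
  -- f8
  have f8 : E.card ≤ ((Finset.Ico 1 R).filter
      (fun n => min (b (P n)) (b n) ≤ s ∧ s < max (b (P n)) (b n) - t)).card := by
    apply Finset.card_le_card
    intro n hn
    simp only [hE, hI, Finset.mem_filter] at hn ⊢
    refine ⟨hn.1, ?_⟩
    rcases hn.2 with ⟨h1, h2⟩ | ⟨h1, h2⟩
    · -- n ∈ B, P n ∉ A
      have hbn : s + t < b n := by
        have := h1; simp only [hB, Finset.mem_filter] at this; exact this.2
      have hbP : b (P n) ≤ s := by
        by_contra hcon
        push_neg at hcon
        apply h2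
        simp only [hA, Finset.mem_filter, Finset.mem_range]
        refine ⟨?_, hcon⟩
        by_contra hK2
        push_neg at hK2
        have := hsb (P n) hK2
        linarith
      constructor
      · exact le_trans (min_le_left _ _) hbP
      · have : b n ≤ max (b (P n)) (b n) := le_max_right _ _
        linarith
    · have hbP : s + t < b (P n) := by
        have := h1; simp only [hB, Finset.mem_filter] at this; exact this.2
      have hbn : b n ≤ s := by
        by_contra hcon
        push_neg at hcon
        apply h2
        simp only [hA, Finset.mem_filter, Finset.mem_range]
        refine ⟨?_, hcon⟩
        by_contra hK2
        push_neg at hK2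
        have := hsb n hK2
        linarith
      constructor
      · exact le_trans (min_le_right _ _) hbn
      · have : b (P n) ≤ max (b (P n)) (b n) := le_max_left _ _
        linarith
  -- final arithmetic
  have hdM : (d-1)*M + M = d*M := by
    have h1 : M ≤ d * M := Nat.le_mul_of_pos_left M (by omega)
    rw [Nat.sub_one_mul]
    omega
  have hdeg : d * M ≤ Wp.card + B'.card + InB.card := by
    rw [f1]
    omega
  -- conclude
  have hEbound : (d-1)*M + 2 ≤ E.card + N := by
    by_cases h0 : 0 ∈ B <;> simp only [h0, if_true, if_false] at f1 f3 <;> omega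
  calc (d-1)*M + 1 + 1 - N ≤ E.card := by omega
    _ ≤ _ := f8


open SimpleGraph

lemma tree_structure {V : Type*} (G : SimpleGraph V) (hacyc : G.IsAcyclic)
    (v : ℕ → V) (hv : Function.Bijective v)
    (hinit : ∀ N : ℕ, 1 ≤ N → (G.induce (v '' Set.Iio N)).Connected) :
    ∃ P : ℕ → ℕ, (∀ n, 1 ≤ n → P n < n ∧ G.Adj (v (P n)) (v n)) ∧
      (∀ i j, G.Adj (v i) (v j) → (i = P j ∧ 1 ≤ j) ∨ (j = P i ∧ 1 ≤ i)) := by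
  classical
  have hvinj := hv.1
  -- existence of an earlier neighbour
  have hex : ∀ n, 1 ≤ n → ∃ i, i < n ∧ G.Adj (v i) (v n) := by
    intro n hn
    have hc := hinit (n+1) (by omega)
    set s : Set V := v '' Set.Iio (n+1) with hs
    have hxn : v n ∈ s := ⟨n, by simp, rfl⟩
    have hx0 : v 0 ∈ s := ⟨0, by simp, rfl⟩
    obtain ⟨W⟩ := hc.preconnected ⟨v n, hxn⟩ ⟨v 0, hx0⟩
    have hlen : 1 ≤ W.length := by
      by_contra hl
      push_neg at hl
      have h0 : (0:ℕ) ≥ W.length := by omega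
      have h1 := W.getVert_of_length_le (i := 0) (by omega)
      rw [W.getVert_zero] at h1
      have h2 := congrArg Subtype.val h1
      simp only at h2
      have := hvinj h2
      omega
    have hadj := W.adj_getVert_succ (i := 0) (by omega)
    rw [W.getVert_zero] at hadj
    set b := W.getVert 1 with hb
    have hadj' : G.Adj (v n) b.1 := hadj
    obtain ⟨i, hi, hvi⟩ := b.2
    have hne : i ≠ n := by
      intro hcon
      subst hcon
      rw [hvi] at hadj'
      exact G.irrefl hadj'
    have hin : i < n := by
      simp only [Set.mem_Iio] at hi
      omega
    exact ⟨i, hin, by rw [← hvi] at hadj'; exact hadj'.symm⟩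
  -- uniqueness
  have huniq : ∀ n, 1 ≤ n → ∀ i j, i < n → j < n →
      G.Adj (v i) (v n) → G.Adj (v j) (v n) → i = j := by
    intro n hn i j hi hj hai haj
    by_contra hne
    set s : Set V := v '' Set.Iio n with hs
    have hc := hinit n hn
    have hxi : v i ∈ s := ⟨i, hi, rfl⟩
    have hxj : v j ∈ s := ⟨j, hj, rfl⟩
    obtain ⟨W⟩ := hc.preconnected ⟨v i, hxi⟩ ⟨v j, hxj⟩
    let hom : G.induce s →g G := ⟨Subtype.val, fun {x y} h => h⟩
    have hh1 : hom ⟨v i, hxi⟩ = v i := rfl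
    have hh2 : hom ⟨v j, hxj⟩ = v j := rfl
    set W' : G.Walk (v i) (v j) := (W.map hom).copy hh1 hh2 with hW'
    have hsupp : ∀ x ∈ W'.support, x ∈ s := by
      intro x hx
      rw [hW', SimpleGraph.Walk.support_copy, SimpleGraph.Walk.support_map] at hx
      simp only [List.mem_map] at hx
      obtain ⟨y, _, rfl⟩ := hx
      exact y.2
    have hvn_not : v n ∉ W'.support := by
      intro hcon
      obtain ⟨k, hk, hvk⟩ := hsupp _ hcon
      simp only [Set.mem_Iio] at hk
      have := hvinj hvk
      omega
    have hvivj : v i ≠ v j := fun hc => hne (hvinj hc)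
    have hvivn : v i ≠ v n := G.ne_of_adj hai
    have hvjvn : v j ≠ v n := G.ne_of_adj haj
    set p2w : G.Walk (v i) (v j) :=
      SimpleGraph.Walk.cons hai (SimpleGraph.Walk.cons haj.symm SimpleGraph.Walk.nil) with hp2w
    have hsupp2 : p2w.support = [v i, v n, v j] := by
      rw [hp2w]
      simp [SimpleGraph.Walk.support_cons]
    have p2path : p2w.IsPath := by
      rw [SimpleGraph.Walk.isPath_def, hsupp2]
      simp only [List.nodup_cons, List.mem_cons, List.mem_singleton, List.not_mem_nil,
        List.nodup_nil, not_or, and_true]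
      exact ⟨⟨hvivn, hvivj, not_false⟩, ⟨fun hc => hvjvn (Eq.symm hc), not_false⟩, not_false⟩
    have hcoe : (W'.toPath : G.Walk (v i) (v j)) = p2w :=
      congrArg Subtype.val (hacyc.path_unique W'.toPath ⟨p2w, p2path⟩)
    apply hvn_not
    apply SimpleGraph.Walk.support_toPath_subset W'
    rw [hcoe, hsupp2]
    simp
  refine ⟨fun n => if h : 1 ≤ n then (hex n h).choose else 0, ?_, ?_⟩
  · intro n hn
    simp only [dif_pos hn]
    exact (hex n hn).choose_spec
  · intro i j hadj
    have hne : i ≠ j := fun hc => G.irrefl (hc ▸ hadj)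
    rcases Nat.lt_or_ge i j with hij | hij
    · left
      have hj : 1 ≤ j := by omega
      refine ⟨?_, hj⟩
      simp only [dif_pos hj]
      exact huniq j hj i (hex j hj).choose hij (hex j hj).choose_spec.1 hadj
        (hex j hj).choose_spec.2
    · right
      have hi : 1 ≤ i := by omega
      refine ⟨?_, hi⟩
      simp only [dif_pos hi]
      exact huniq i hi j (hex i hi).choose (by omega) (hex i hi).choose_spec.1 hadj.symm
        (hex i hi).choose_spec.2

end TreePS

/-- The edge boundary of a set `A`: the edges of `G` with exactly one endpoint in `A`. -/
def edgeBoundary {V : Type*} (G : SimpleGraph V) (A : Set V) : Set (Sym2 V) :=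
  {e | e ∈ G.edgeSet ∧ ∃ u w : V, e = s(u, w) ∧ u ∈ A ∧ w ∉ A}

/-- The vertex boundary of `A`: vertices outside `A` adjacent to some vertex of `A`. -/
def vertexBoundary {V : Type*} (G : SimpleGraph V) (A : Set V) : Set V :=
  {u | u ∉ A ∧ ∃ w ∈ A, G.Adj u w}

/-- The vertex-isoperimetric profile `∂_V(N)`. -/
noncomputable def vertexProfile {V : Type*} (G : SimpleGraph V) (N : ℕ) : ℕ :=
  sInf {k : ℕ | ∃ A : Set V, A.Finite ∧ A.ncard = N ∧ (vertexBoundary G A).ncard = k}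

/-- `‖∇f‖_{L¹} = ∑_{{u,w} ∈ E} |f u - f w|`. -/
noncomputable def gradL1 {V : Type*} (G : SimpleGraph V) (f : V → ℝ) : ℝ :=
  ∑' e : G.edgeSet,
    Sym2.lift ⟨fun u w => |f u - f w|, fun u w => by dsimp only; rw [abs_sub_comm]⟩ e.1

/-- `‖∇f‖_{L^∞} = sup_{{u,w} ∈ E} |f u - f w|`. -/
noncomputable def gradLinf {V : Type*} (G : SimpleGraph V) (f : V → ℝ) : ℝ :=
  ⨆ e : G.edgeSet,
    Sym2.lift ⟨fun u w => |f u - f w|, fun u w => by dsimp only; rw [abs_sub_comm]⟩ e.1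

/-- `‖∇f‖_{L^p} = (∑_{{u,w} ∈ E} |f u - f w|^p)^(1/p)` for real `p`. -/
noncomputable def gradLp {V : Type*} (G : SimpleGraph V) (f : V → ℝ) (p : ℝ) : ℝ :=
  (∑' e : G.edgeSet,
    Sym2.lift ⟨fun u w => |f u - f w| ^ p,
      fun u w => by dsimp only; rw [abs_sub_comm]⟩ e.1) ^ (1 / p)

/-- `‖∇f‖_{L²} = (∑_{{u,w} ∈ E} |f u - f w|²)^(1/2)`. -/
noncomputable def gradL2 {V : Type*} (G : SimpleGraph V) (f : V → ℝ) : ℝ :=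
  Real.sqrt (∑' e : G.edgeSet,
    Sym2.lift ⟨fun u w => |f u - f w| ^ 2,
      fun u w => by dsimp only; rw [abs_sub_comm]⟩ e.1)

/-- `g` is the rearrangement of `f` along the enumeration `v` (with `v 0 = v₁`):
`g` is obtained from `f` by permuting its values, and the values of `g` are
non-increasing along the enumeration. -/
def IsRearrangement {V : Type*} (v : ℕ → V) (f g : V → ℝ) : Prop :=
  (∃ σ : Equiv.Perm V, g = f ∘ σ) ∧ ∀ m n : ℕ, m ≤ n → g (v n) ≤ g (v m)

/-- The grid graph `(ℤ², ℓ¹)`. -/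
def gridGraph : SimpleGraph (ℤ × ℤ) where
  Adj p q := |p.1 - q.1| + |p.2 - q.2| = 1
  symm := by
    constructor
    intro p q h
    show |q.1 - p.1| + |q.2 - p.2| = 1
    rw [abs_sub_comm q.1 p.1, abs_sub_comm q.2 p.2]
    exact h
  loopless := by constructor; intro p h; simp at h

/-- One step of the counterclockwise square spiral on `ℤ²`. -/
def spiralNext : ℤ × ℤ → ℤ × ℤ := fun p =>
  if 1 ≤ p.1 ∧ p.2 = -p.1 then (p.1 + 1, p.2)
  else if 1 ≤ p.1 ∧ -p.1 ≤ p.2 ∧ p.2 < p.1 then (p.1, p.2 + 1)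
  else if 1 ≤ p.2 ∧ -p.2 < p.1 ∧ p.1 ≤ p.2 then (p.1 - 1, p.2)
  else if p.1 ≤ -1 ∧ p.1 < p.2 ∧ p.2 ≤ -p.1 then (p.1, p.2 - 1)
  else (p.1 + 1, p.2)

/-- The spiral enumeration of `ℤ²`, 0-indexed: `spiral 0 = v₁ = (0,0)`,
`spiral 1 = v₂ = (1,0)`, `spiral 2 = v₃ = (1,1)`, `spiral 3 = v₄ = (0,1)`, … -/
def spiral (n : ℕ) : ℤ × ℤ := spiralNext^[n] (0, 0)

/-- On the infinite `d`-regular tree (`d ≥ 2`), any enumeration `v`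
such that each initial segment `{v₁,…,v_N}` induces a connected subgraph and every
vertex adjacent to `{v₁,…,v_N}` lies in `{v₁,…,v_{(d-1)N+2}}` (e.g. the canonical
breadth-first ordering) gives a rearrangement satisfying `‖∇f*‖_{L^p} ≤ ‖∇f‖_{L^p}`
for all `1 ≤ p < ∞` and for `p = ∞`. -/
theorem tree_polya_szego {V : Type*} (G : SimpleGraph V) (d : ℕ) (hd : 2 ≤ d)
    (hconn : G.Connected) (hacyc : G.IsAcyclic)
    (hreg : ∀ u : V, (G.neighborSet u).ncard = d)
    (v : ℕ → V) (hv : Function.Bijective v)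
    (hinit : ∀ N : ℕ, 1 ≤ N → (G.induce (v '' Set.Iio N)).Connected)
    (hnbr : ∀ N : ℕ, 1 ≤ N → ∀ u : V, (∃ i < N, G.Adj u (v i)) →
      u ∈ v '' Set.Iio ((d - 1) * N + 2))
    (f fstar : V → ℝ) (hsupp : (Function.support f).Finite) (hpos : ∀ x, 0 ≤ f x)
    (hre : IsRearrangement v f fstar) :
    (∀ p : ℝ, 1 ≤ p → gradLp G fstar p ≤ gradLp G f p) ∧
      gradLinf G fstar ≤ gradLinf G f := by
  classical
  obtain ⟨P, hP1, hP2⟩ := TreePS.tree_structure G hacyc v hv hinit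
  have hvinj := hv.1
  have hPlt : ∀ n, 1 ≤ n → P n < n := fun n hn => (hP1 n hn).1
  have hPadj : ∀ n, 1 ≤ n → G.Adj (v (P n)) (v n) := fun n hn => (hP1 n hn).2
  -- key direction →
  have hkey1 : ∀ M n, 1 ≤ M → 1 ≤ n → P n < M → n ≤ (d-1)*M+1 := by
    intro M n hM hn hPn
    have h := hnbr M hM (v n) ⟨P n, hPn, (hPadj n hn).symm⟩
    obtain ⟨k, hk, hvk⟩ := h
    have hkn := hvinj hvk
    subst hkn
    simp only [Set.mem_Iio] at hk
    omega
  -- fibers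
  set Fm : ℕ → Finset ℕ :=
    fun m => (Finset.Ico 1 ((d-1)*(m+1)+2)).filter (fun n => P n = m) with hFm
  have hfib_any : ∀ m (X : ℕ), (d-1)*(m+1)+2 ≤ X →
      (Finset.Ico 1 X).filter (fun n => P n = m) = Fm m := by
    intro m X hX
    ext n
    simp only [hFm, Finset.mem_filter, Finset.mem_Ico]
    constructor
    · rintro ⟨⟨h1, _⟩, hPn⟩
      have : n ≤ (d-1)*(m+1)+1 := hkey1 (m+1) n (by omega) h1 (by omega)
      exact ⟨⟨h1, by omega⟩, hPn⟩
    · rintro ⟨⟨h1, h2⟩, hPn⟩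
      exact ⟨⟨h1, by omega⟩, hPn⟩
  have hPm_not_mem : ∀ m, 1 ≤ m → P m ∉ Fm m := by
    intro m hm hcon
    simp only [hFm, Finset.mem_filter, Finset.mem_Ico] at hcon
    obtain ⟨⟨ha, _⟩, hc⟩ := hcon
    have h1 := hPlt (P m) ha
    have h2 := hPlt m hm
    omega
  have hfibcard : ∀ m, (Fm m).card = d - 1 + if m = 0 then 1 else 0 := by
    intro m
    by_cases hm : m = 0
    · subst hm
      have hns : G.neighborSet (v 0) = ↑((Fm 0).image v) := by
        ext u
        simp only [SimpleGraph.mem_neighborSet, Finset.coe_image, Set.mem_image,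
          Finset.mem_coe, hFm, Finset.mem_filter, Finset.mem_Ico]
        constructor
        · intro hadj
          obtain ⟨j, rfl⟩ := hv.2 u
          rcases hP2 0 j hadj with ⟨hj0, hj1⟩ | ⟨hj0, hj1⟩
          · refine ⟨j, ⟨⟨hj1, ?_⟩, hj0.symm⟩, rfl⟩
            have : j ≤ (d-1)*(0+1)+1 := hkey1 1 j (by omega) hj1 (by omega)
            omega
          · omega
        · rintro ⟨k, ⟨⟨hk1, _⟩, hPk⟩, rfl⟩
          have := hPadj k hk1
          rw [hPk] at this
          exact this
      have hd0 := hreg (v 0)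
      rw [hns, Set.ncard_coe_finset,
        Finset.card_image_of_injective _ hvinj] at hd0
      norm_num
      omega
    · have hm1 : 1 ≤ m := by omega
      have hns : G.neighborSet (v m) = ↑((insert (P m) (Fm m)).image v) := by
        ext u
        simp only [SimpleGraph.mem_neighborSet, Finset.coe_image, Set.mem_image,
          Finset.mem_coe, Finset.mem_insert, hFm, Finset.mem_filter, Finset.mem_Ico]
        constructor
        · intro hadj
          obtain ⟨j, rfl⟩ := hv.2 u
          rcases hP2 m j hadj with ⟨hj0, hj1⟩ | ⟨hj0, hj1⟩
          · refine ⟨j, Or.inr ⟨⟨hj1, ?_⟩, hj0.symm⟩, rfl⟩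
            have : j ≤ (d-1)*(m+1)+1 := hkey1 (m+1) j (by omega) hj1 (by rw [← hj0]; omega)
            omega
          · exact ⟨j, Or.inl hj0, rfl⟩
        · rintro ⟨k, hk, rfl⟩
          rcases hk with hk | ⟨⟨hk1, _⟩, hPk⟩
          · rw [hk]
            exact (hPadj m hm1).symm
          · have := hPadj k hk1
            rw [hPk] at this
            exact this
      have hdm := hreg (v m)
      rw [hns, Set.ncard_coe_finset,
        Finset.card_image_of_injective _ hvinj,
        Finset.card_insert_of_notMem (hPm_not_mem m hm1)] at hdm
      simp only [if_neg hm]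
      omega
  -- key ↔
  have hkey : ∀ M n, 1 ≤ M → 1 ≤ n → (P n < M ↔ n ≤ (d-1)*M+1) := by
    intro M n hM hn
    constructor
    · exact hkey1 M n hM hn
    · intro hnM
      have hT : (Finset.Icc 1 ((d-1)*M+1)).filter (fun k => P k < M)
          = Finset.Icc 1 ((d-1)*M+1) := by
        apply Finset.eq_of_subset_of_card_le (Finset.filter_subset _ _)
        have hbU : (Finset.Icc 1 ((d-1)*M+1)).filter (fun k => P k < M)
            = (Finset.range M).biUnion
              (fun m => (Finset.Icc 1 ((d-1)*M+1)).filter (fun k => P k = m)) := by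
          ext k
          simp only [Finset.mem_filter, Finset.mem_biUnion, Finset.mem_range]
          constructor
          · rintro ⟨hk, hPk⟩
            exact ⟨P k, hPk, hk, rfl⟩
          · rintro ⟨m, hm, hk, rfl⟩
            exact ⟨hk, hm⟩
        have hfib2 : ∀ m, m < M → (Finset.Icc 1 ((d-1)*M+1)).filter (fun k => P k = m)
            = Fm m := by
          intro m hm
          ext k
          simp only [hFm, Finset.mem_filter, Finset.mem_Icc, Finset.mem_Ico]
          constructor
          · rintro ⟨⟨h1, _⟩, hPk⟩
            have : k ≤ (d-1)*(m+1)+1 := hkey1 (m+1) k (by omega) h1 (by omega)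
            exact ⟨⟨h1, by omega⟩, hPk⟩
          · rintro ⟨⟨h1, h2⟩, hPk⟩
            have hmul : (d-1)*(m+1) ≤ (d-1)*M := Nat.mul_le_mul_left _ (by omega)
            exact ⟨⟨h1, by omega⟩, hPk⟩
        have hcard : ((Finset.Icc 1 ((d-1)*M+1)).filter (fun k => P k < M)).card
            = (d-1)*M+1 := by
          rw [hbU, Finset.card_biUnion]
          · have : ∀ m ∈ Finset.range M,
                ((Finset.Icc 1 ((d-1)*M+1)).filter (fun k => P k = m)).card
                  = d - 1 + if m = 0 then 1 else 0 := by
              intro m hm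
              rw [hfib2 m (Finset.mem_range.1 hm)]
              exact hfibcard m
            rw [Finset.sum_congr rfl this, Finset.sum_add_distrib, Finset.sum_const,
              Finset.card_range, Finset.sum_ite_eq' (Finset.range M) 0 (fun _ => 1)]
            simp only [Finset.mem_range, smul_eq_mul]
            rw [if_pos (by omega : 0 < M)]
            rw [Nat.mul_comm]
          · intro m₁ _ m₂ _ hne
            apply Finset.disjoint_left.2
            intro k hk₁ hk₂
            simp only [Finset.mem_filter] at hk₁ hk₂
            exact hne (hk₁.2 ▸ hk₂.2 ▸ rfl)
        rw [hcard, Nat.card_Icc]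
        omega
      have : n ∈ (Finset.Icc 1 ((d-1)*M+1)).filter (fun k => P k < M) := by
        rw [hT]
        simp only [Finset.mem_Icc]
        omega
      exact (Finset.mem_filter.1 this).2
  -- Phase B: transport to ℕ
  obtain ⟨σ, hσ⟩ := hre.1
  set a : ℕ → ℝ := fun n => fstar (v n) with ha_def
  set b : ℕ → ℝ := fun n => f (v n) with hb_def
  have ha0 : ∀ n, 0 ≤ a n := by
    intro n
    rw [ha_def]
    simp only [hσ, Function.comp_apply]
    exact hpos _
  have hb0 : ∀ n, 0 ≤ b n := fun n => hpos _
  have hanti : ∀ m n : ℕ, m ≤ n → a n ≤ a m := fun m n h => hre.2 m n h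
  -- finite supports
  have hfa : (Function.support a).Finite := by
    have : a = f ∘ (fun n => σ (v n)) := by
      funext n
      simp [ha_def, hσ]
    rw [this, Function.support_comp_eq_preimage]
    exact Set.Finite.preimage
      (Set.injOn_of_injective (fun x y hxy => hvinj (σ.injective hxy))) hsupp
  have hfb : (Function.support b).Finite := by
    have : b = f ∘ v := rfl
    rw [this, Function.support_comp_eq_preimage]
    exact Set.Finite.preimage (Set.injOn_of_injective hvinj) hsupp
  obtain ⟨m0, hm0⟩ := (hfa.union hfb).bddAbove
  set K : ℕ := m0 + 1 with hK_def
  have hK : 1 ≤ K := by omega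
  have hsa : ∀ n, K ≤ n → a n = 0 := by
    intro n hn
    by_contra hne
    have : n ∈ Function.support a ∪ Function.support b := Or.inl hne
    have := hm0 this
    omega
  have hsb : ∀ n, K ≤ n → b n = 0 := by
    intro n hn
    by_contra hne
    have : n ∈ Function.support a ∪ Function.support b := Or.inr hne
    have := hm0 this
    omega
  set R : ℕ := (d-1)*K+2 with hR_def
  have hKR : K < R := by
    have : K ≤ (d-1)*K := Nat.le_mul_of_pos_left K (by omega)
    omega
  -- equimeasurability
  set ev : ℕ ≃ V := Equiv.ofBijective v hv with hev
  set τ : ℕ ≃ ℕ := ev.trans (σ.trans ev.symm) with hτ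
  have hab : ∀ n, a n = b (τ n) := by
    intro n
    show fstar (v n) = f (v (τ n))
    have hvτ : v (τ n) = σ (v n) := by
      show ev (ev.symm (σ (ev n))) = σ (v n)
      rw [Equiv.apply_symm_apply]
      rfl
    rw [hσ, hvτ]
    rfl
  have hcount : ∀ s : ℝ, 0 ≤ s →
      ((Finset.range K).filter (fun k => s < a k)).card
        = ((Finset.range K).filter (fun k => s < b k)).card := by
    intro s hs
    apply Finset.card_bij (fun k _ => τ k)
    · intro k hk
      simp only [Finset.mem_filter, Finset.mem_range] at hk ⊢
      constructor
      · have hbk : b (τ k) ≠ 0 := by rw [← hab]; intro h0; rw [h0] at hk; linarith [hk.2]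
        have : τ k ∈ Function.support a ∪ Function.support b := Or.inr hbk
        have := hm0 this
        omega
      · rw [← hab]; exact hk.2
    · intro k₁ h₁ k₂ h₂ h
      exact τ.injective h
    · intro k' hk'
      simp only [Finset.mem_filter, Finset.mem_range] at hk'
      refine ⟨τ.symm k', ?_, by simp⟩
      simp only [Finset.mem_filter, Finset.mem_range]
      have hak : a (τ.symm k') = b k' := by rw [hab]; simp
      constructor
      · have hane : a (τ.symm k') ≠ 0 := by rw [hak]; intro h0; rw [h0] at hk'; linarith [hk'.2]
        have : τ.symm k' ∈ Function.support a ∪ Function.support b := Or.inl hane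
        have := hm0 this
        omega
      · rw [hak]; exact hk'.2
  -- bound on parents
  have hPK : ∀ n, R ≤ n → K ≤ P n := by
    intro n hn
    by_contra hcon
    push_neg at hcon
    have h1 : 1 ≤ n := by omega
    have := hkey1 K n hK h1 hcon
    omega
  -- the edge equivalence
  have hedge : ∀ n : ℕ, s(v (P (n+1)), v (n+1)) ∈ G.edgeSet := by
    intro n
    exact (hPadj (n+1) (by omega))
  have hbij : Function.Bijective (fun n : ℕ =>
      (⟨s(v (P (n+1)), v (n+1)), hedge n⟩ : G.edgeSet)) := by
    constructor
    · intro n m h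
      have h1 : s(v (P (n+1)), v (n+1)) = s(v (P (m+1)), v (m+1)) := congrArg Subtype.val h
      rw [Sym2.eq_iff] at h1
      rcases h1 with ⟨hh1, hh2⟩ | ⟨hh1, hh2⟩
      · have := hvinj hh2
        omega
      · have e1 := hvinj hh1
        have e2 := hvinj hh2
        have l1 := hPlt (n+1) (by omega)
        have l2 := hPlt (m+1) (by omega)
        omega
    · rintro ⟨e, he⟩
      induction e with
      | _ u w =>
        have hadj : G.Adj u w := he
        obtain ⟨i, rfl⟩ := hv.2 u
        obtain ⟨j, rfl⟩ := hv.2 w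
        rcases hP2 i j hadj with ⟨hij, hj1⟩ | ⟨hij, hi1⟩
        · refine ⟨j - 1, Subtype.ext ?_⟩
          show s(v (P (j-1+1)), v (j-1+1)) = s(v i, v j)
          have hj : j - 1 + 1 = j := by omega
          rw [hj, hij]
        · refine ⟨i - 1, Subtype.ext ?_⟩
          show s(v (P (i-1+1)), v (i-1+1)) = s(v i, v j)
          have hi : i - 1 + 1 = i := by omega
          rw [hi, hij, Sym2.eq_swap]
  set F : ℕ ≃ G.edgeSet := Equiv.ofBijective _ hbij with hF
  -- tsum reduction
  have hts : ∀ (g : Sym2 V → ℝ), (∀ n, R ≤ n → g s(v (P n), v n) = 0) →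
      ∑' (e : G.edgeSet), g e.1 = ∑ n ∈ Finset.Ico 1 R, g s(v (P n), v n) := by
    intro g h0
    rw [← Equiv.tsum_eq F (fun e => g e.1)]
    have hFn : ∀ n : ℕ, g (F n).1 = g s(v (P (n+1)), v (n+1)) := fun n => rfl
    rw [tsum_eq_sum (s := Finset.range (R-1)) ?van]
    case van =>
      intro n hn
      simp only [Finset.mem_range] at hn
      rw [hFn]
      exact h0 (n+1) (by omega)
    rw [Finset.sum_Ico_eq_sum_range]
    apply Finset.sum_congr rfl
    intro i _
    rw [hFn, Nat.add_comm 1 i]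
  -- fiber counts over Ico 1 R
  have hfib' : ∀ m, m < K →
      (((Finset.Ico 1 ((d-1)*K+2)).filter (fun n => P n = m)).card
        = d - 1 + if m = 0 then 1 else 0) := by
    intro m hm
    have hle : (d-1)*(m+1)+2 ≤ (d-1)*K+2 := by
      have : (d-1)*(m+1) ≤ (d-1)*K := Nat.mul_le_mul_left _ (by omega)
      omega
    rw [hfib_any m _ hle]
    exact hfibcard m
  -- crossing cards
  have hcross : ∀ (t : ℝ), 0 ≤ t → ∀ (r : ℝ),
      (((Finset.Ico 1 R).filter (fun n => a n ≤ r ∧ r < a (P n) - t)).card : ℝ)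
        ≤ (((Finset.Ico 1 R).filter
            (fun n => min (b (P n)) (b n) ≤ r ∧ r < max (b (P n)) (b n) - t)).card : ℝ) := by
    intro t ht r
    exact TreePS.crossing_card_le d K hd hK P a b hPlt
      (fun M n hM _ hn => hkey M n hM hn) hfib' ha0 hb0 hanti hsa hsb hcount t ht r
  have hx0 : ∀ n, 1 ≤ n → 0 ≤ a (P n) - a n :=
    fun n hn => sub_nonneg.2 (hanti _ _ (le_of_lt (hPlt n hn)))
  -- C2
  have hC2 : ∀ t : ℝ, 0 ≤ t →
      ∑ n ∈ Finset.Ico 1 R, max (|a (P n) - a n| - t) 0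
        ≤ ∑ n ∈ Finset.Ico 1 R, max (|b (P n) - b n| - t) 0 := by
    intro t ht
    have h := TreePS.sum_max_le_of_card (Finset.Ico 1 R)
      (fun n => a (P n) - t) (fun n => a n)
      (fun n => max (b (P n)) (b n) - t) (fun n => min (b (P n)) (b n))
      (fun r => hcross t ht r)
    calc ∑ n ∈ Finset.Ico 1 R, max (|a (P n) - a n| - t) 0
        = ∑ n ∈ Finset.Ico 1 R, max ((a (P n) - t) - a n) 0 := by
          apply Finset.sum_congr rfl
          intro n hn
          have h1 : 1 ≤ n := (Finset.mem_Ico.1 hn).1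
          rw [abs_of_nonneg (hx0 n h1), sub_right_comm]
      _ ≤ ∑ n ∈ Finset.Ico 1 R, max ((max (b (P n)) (b n) - t) - min (b (P n)) (b n)) 0 := h
      _ = ∑ n ∈ Finset.Ico 1 R, max (|b (P n) - b n| - t) 0 := by
          apply Finset.sum_congr rfl
          intro n _
          rw [← max_sub_min_eq_abs, sub_right_comm,
            max_comm (b n) (b (P n)), min_comm (b n) (b (P n))]
  -- core Lp inequality on finite sums
  have hcore : ∀ p : ℝ, 1 ≤ p →
      ∑ n ∈ Finset.Ico 1 R, |a (P n) - a n| ^ p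
        ≤ ∑ n ∈ Finset.Ico 1 R, |b (P n) - b n| ^ p := by
    intro p hp
    rcases eq_or_lt_of_le hp with hp1 | hp1
    · rw [← hp1]
      simp only [Real.rpow_one]
      have h := hC2 0 le_rfl
      simp only [sub_zero] at h
      calc ∑ n ∈ Finset.Ico 1 R, |a (P n) - a n|
          = ∑ n ∈ Finset.Ico 1 R, max (|a (P n) - a n|) 0 := by
            apply Finset.sum_congr rfl
            intro n _
            rw [max_eq_left (abs_nonneg _)]
        _ ≤ ∑ n ∈ Finset.Ico 1 R, max (|b (P n) - b n|) 0 := h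
        _ = ∑ n ∈ Finset.Ico 1 R, |b (P n) - b n| := by
            apply Finset.sum_congr rfl
            intro n _
            rw [max_eq_left (abs_nonneg _)]
    · exact TreePS.sum_rpow_le_sum_rpow (Finset.Ico 1 R) _ _
        (fun n _ => abs_nonneg _) (fun n _ => abs_nonneg _)
        (fun t ht => hC2 t ht) hp1
  -- vanishing of terms beyond R
  have hvan_a : ∀ n, R ≤ n → a (P n) = 0 ∧ a n = 0 := by
    intro n hn
    exact ⟨hsa _ (hPK n hn), hsa _ (by omega)⟩
  have hvan_b : ∀ n, R ≤ n → b (P n) = 0 ∧ b n = 0 := by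
    intro n hn
    exact ⟨hsb _ (hPK n hn), hsb _ (by omega)⟩
  constructor
  · -- Lp part
    intro p hp
    have hp0 : p ≠ 0 := by linarith
    simp only [gradLp]
    apply Real.rpow_le_rpow
    · apply tsum_nonneg
      rintro ⟨es, he⟩
      induction es using Sym2.ind with
      | _ u w =>
        simp only [Sym2.lift_mk]
        exact Real.rpow_nonneg (abs_nonneg _) _
    · rw [hts (Sym2.lift ⟨fun u w => |fstar u - fstar w| ^ p,
            fun u w => by dsimp only; rw [abs_sub_comm]⟩) ?za,
          hts (Sym2.lift ⟨fun u w => |f u - f w| ^ p,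
            fun u w => by dsimp only; rw [abs_sub_comm]⟩) ?zb]
      case za =>
        intro n hn
        simp only [Sym2.lift_mk]
        have e1 : fstar (v (P n)) = 0 := (hvan_a n hn).1
        have e2 : fstar (v n) = 0 := (hvan_a n hn).2
        rw [e1, e2]
        simp [Real.zero_rpow hp0]
      case zb =>
        intro n hn
        simp only [Sym2.lift_mk]
        have e1 : f (v (P n)) = 0 := (hvan_b n hn).1
        have e2 : f (v n) = 0 := (hvan_b n hn).2
        rw [e1, e2]
        simp [Real.zero_rpow hp0]
      simp only [Sym2.lift_mk]
      exact hcore p hp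
    · positivity
  · -- L∞ part
    set Tb : ℝ := ∑ k ∈ Finset.range K, b k with hTb
    have hble : ∀ i, b i ≤ Tb := by
      intro i
      by_cases hi : i < K
      · exact Finset.single_le_sum (fun k _ => hb0 k) (Finset.mem_range.2 hi)
      · push_neg at hi
        rw [hTb]
        have : b i = 0 := hsb i hi
        rw [this]
        exact Finset.sum_nonneg (fun k _ => hb0 k)
    have hbdd : BddAbove (Set.range (fun e : G.edgeSet =>
        Sym2.lift ⟨fun u w => |f u - f w|,
          fun u w => by dsimp only; rw [abs_sub_comm]⟩ e.1)) := by
      refine ⟨Tb, ?_⟩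
      rintro x ⟨e, rfl⟩
      rcases e with ⟨es, he⟩
      induction es using Sym2.ind with
      | _ u w =>
        simp only [Sym2.lift_mk]
        obtain ⟨i, rfl⟩ := hv.2 u
        obtain ⟨j, rfl⟩ := hv.2 w
        have hbi : f (v i) = b i := rfl
        have hbj : f (v j) = b j := rfl
        refine abs_le.2 ⟨?_, ?_⟩
        · rw [hbi, hbj]
          have := hble j
          have := hb0 i
          have := hb0 j
          have := hble i
          linarith
        · rw [hbi, hbj]
          have := hble i
          have := hb0 j
          linarith
    haveI : Nonempty G.edgeSet := ⟨_, hedge 0⟩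
    simp only [gradLinf]
    set T : ℝ := ⨆ e : G.edgeSet, Sym2.lift ⟨fun u w => |f u - f w|,
        fun u w => by dsimp only; rw [abs_sub_comm]⟩ e.1 with hTdef
    have hyt : ∀ mm, 1 ≤ mm → |b (P mm) - b mm| ≤ T := by
      intro mm h1
      have hle := le_ciSup hbdd (F (mm - 1))
      have hv1 : Sym2.lift ⟨fun u w => |f u - f w|,
          fun u w => by dsimp only; rw [abs_sub_comm]⟩ ((F (mm-1)) : G.edgeSet).1
            = |b (P (mm-1+1)) - b (mm-1+1)| := rfl
      have hmm : mm - 1 + 1 = mm := by omega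
      rw [hmm] at hv1
      calc |b (P mm) - b mm| = _ := hv1.symm
        _ ≤ T := hle
    have ht0 : 0 ≤ T := le_trans (abs_nonneg _) (hyt 1 le_rfl)
    apply ciSup_le
    intro e
    obtain ⟨n, hn⟩ := hbij.2 e
    have hval : Sym2.lift ⟨fun u w => |fstar u - fstar w|,
        fun u w => by dsimp only; rw [abs_sub_comm]⟩ e.1
          = |a (P (n+1)) - a (n+1)| := by
      rw [← hn]
      rfl
    rw [hval]
    set m := n + 1 with hm
    have hm1 : 1 ≤ m := by omega
    rw [abs_of_nonneg (hx0 m hm1)]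
    by_contra hcon
    push_neg at hcon
    by_cases hmR : R ≤ m
    · have := hvan_a m hmR
      rw [this.1, this.2] at hcon
      simp at hcon
      linarith
    · push_neg at hmR
      have hmI : m ∈ Finset.Ico 1 R := Finset.mem_Ico.2 ⟨hm1, hmR⟩
      have h1 := hC2 T ht0
      have hL : a (P m) - a m - T ≤ ∑ k ∈ Finset.Ico 1 R, max (|a (P k) - a k| - T) 0 := by
        calc a (P m) - a m - T ≤ max (|a (P m) - a m| - T) 0 := by
              rw [abs_of_nonneg (hx0 m hm1)]
              exact le_max_left _ _
          _ ≤ ∑ k ∈ Finset.Ico 1 R, max (|a (P k) - a k| - T) 0 :=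
              Finset.single_le_sum (f := fun k => max (|a (P k) - a k| - T) 0)
                (fun k _ => le_max_right _ _) hmI
      have hRz : ∑ k ∈ Finset.Ico 1 R, max (|b (P k) - b k| - T) 0 = 0 := by
        apply Finset.sum_eq_zero
        intro k hk
        have h1k : 1 ≤ k := (Finset.mem_Ico.1 hk).1
        exact max_eq_right (by linarith [hyt k h1k])
      rw [hRz] at h1
      have := le_trans hL h1
      linarith
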